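/- arXiv:2203.05329 — 2 statements merged into one kernel-verified Lean document; each statement's English description precedes it below -/
import Mathlib

section
/- There exists a countable integral ultrametric space PU, all of whose bounded subsets are finite, such that every proper metric space of asymptotic dimension 0 admits a coarse embedding into PU. -/
/-- `d` is a metric on the set `X`. -/
def IsMetricD {X : Type*} (d : X → X → ℝ) : Prop :=
  (∀ x, d x x = 0) ∧ (∀ x y, d x y = 0 → x = y) ∧ (∀ x y, d x y = d y x) ∧
    (∀ x y z, d x z ≤ d x y + d y z)

/-- the ultrametric (strong triangle) inequality. -/
def IsUltraD {X : Type*} (d : X → X → ℝ) : Prop :=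
  ∀ x y z, d x z ≤ max (d x y) (d y z)

/-- There is an `r`-chain joining `a` and `b`. -/
def ChainD {Y : Type*} (d : Y → Y → ℝ) (r : ℝ) (a b : Y) : Prop :=
  ∃ (k : ℕ) (c : ℕ → Y), c 0 = a ∧ c k = b ∧ ∀ i < k, d (c i) (c (i + 1)) < r

/-- asymptotic dimension 0: chains of uniformly bounded gauge are uniformly bounded. -/
def AsDimZeroD {Y : Type*} (d : Y → Y → ℝ) : Prop :=
  ∀ r > (0 : ℝ), ∃ s > (0 : ℝ), ∀ a b : Y, ChainD d r a b → d a b ≤ s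

/-- large scale continuous (uniformly bornologous). -/
def LSCD {X Y : Type*} (dX : X → X → ℝ) (dY : Y → Y → ℝ) (f : X → Y) : Prop :=
  ∀ R > (0 : ℝ), ∃ s > (0 : ℝ), ∀ x y : X, dX x y ≤ R → dY (f x) (f y) ≤ s

/-- uniformly proper. -/
def UnifProperD {X Y : Type*} (dX : X → X → ℝ) (dY : Y → Y → ℝ) (f : X → Y) : Prop :=
  ∀ R > (0 : ℝ), ∃ s > (0 : ℝ), ∀ x y : X, dY (f x) (f y) ≤ R → dX x y ≤ s

/-- coarsely surjective. -/
def CoarselySurjD {X Y : Type*} (dY : Y → Y → ℝ) (f : X → Y) : Prop :=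
  ∃ R > (0 : ℝ), ∀ y : Y, ∃ x : X, dY (f x) y ≤ R

/-- coarse embedding. -/
def CoarseEmbD {X Y : Type*} (dX : X → X → ℝ) (dY : Y → Y → ℝ) (f : X → Y) : Prop :=
  LSCD dX dY f ∧ UnifProperD dX dY f

/-- coarse equivalence. -/
def CoarseEquivD {X Y : Type*} (dX : X → X → ℝ) (dY : Y → Y → ℝ) (f : X → Y) : Prop :=
  LSCD dX dY f ∧ UnifProperD dX dY f ∧ CoarselySurjD dY f

/-- the induced integral ultrametric `d_f^ul`. -/
noncomputable def dulD {X Y : Type*} (d : Y → Y → ℝ) (f : X → Y) (x y : X) : ℝ :=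
  letI := Classical.decEq X
  if x = y then 0 else
    ((sInf {r : ℕ | 1 ≤ r ∧ ChainD d (r : ℝ) (f x) (f y)} : ℕ) : ℝ)

/-- `d` is a metric on the subset `A`. -/
def IsMetricOnD {X : Type*} (d : X → X → ℝ) (A : Set X) : Prop :=
  (∀ x ∈ A, d x x = 0) ∧ (∀ x ∈ A, ∀ y ∈ A, d x y = 0 → x = y) ∧
    (∀ x ∈ A, ∀ y ∈ A, d x y = d y x) ∧
    (∀ x ∈ A, ∀ y ∈ A, ∀ z ∈ A, d x z ≤ d x y + d y z)

/-- the ultrametric inequality on a subset. -/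
def IsUltraOnD {X : Type*} (d : X → X → ℝ) (A : Set X) : Prop :=
  ∀ x ∈ A, ∀ y ∈ A, ∀ z ∈ A, d x z ≤ max (d x y) (d y z)

/-- every triangle is isosceles. -/
def IsoscelesD {X : Type*} (d : X → X → ℝ) : Prop :=
  ∀ x y z : X, d x y = d y z ∨ d x y = d x z ∨ d y z = d x z

/-- every triangle with vertices in `A` is isosceles. -/
def IsoscelesOnD {X : Type*} (d : X → X → ℝ) (A : Set X) : Prop :=
  ∀ x ∈ A, ∀ y ∈ A, ∀ z ∈ A, d x y = d y z ∨ d x y = d x z ∨ d y z = d x z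

/-- a set is bounded with respect to the distance function `d`. -/
def BoundedD {X : Type*} (d : X → X → ℝ) (A : Set X) : Prop :=
  ∃ C : ℝ, ∀ x ∈ A, ∀ y ∈ A, d x y ≤ C

/-- `d` makes the disjoint union `Σ s, X s` a coarse disjoint union of the family
of metrics `ds`. -/
def IsCoarseDisjointUnion {S : Type*} {X : S → Type*} (ds : ∀ s, X s → X s → ℝ)
    (d : (Σ s, X s) → (Σ s, X s) → ℝ) : Prop :=
  (∀ (s : S) (x y : X s), d ⟨s, x⟩ ⟨s, y⟩ = ds s x y) ∧
    ∀ M > (0 : ℝ), ∃ B : ∀ s, Set (X s),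
      (∀ s, BoundedD (ds s) (B s)) ∧ {s | (B s).Nonempty}.Finite ∧
      ∀ (s t : S) (x : X s) (y : X t), s ≠ t → x ∉ B s → y ∉ B t → d ⟨s, x⟩ ⟨t, y⟩ > M

/-! ### Auxiliary development for the universal space -/

open scoped Classical

namespace U17

/-- admissible pairs: a column index together with a finitely supported function whose
support and values are bounded by the column index. -/
def Good (p : ℕ × (ℕ →₀ ℕ)) : Prop := ∀ r : ℕ, p.2 r ≠ 0 → r < p.1 ∧ p.2 r < p.1

/-- The universal space. -/
def PU0 : Type := {p : ℕ × (ℕ →₀ ℕ) // Good p}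

instance : Countable PU0 := by
  unfold PU0; infer_instance

/-- inner (column) integral ultrametric. -/
noncomputable def dI (v w : ℕ →₀ ℕ) : ℕ :=
  ((v.support ∪ w.support).filter fun r => v r ≠ w r).sup (· + 1)

lemma le_dI {v w : ℕ →₀ ℕ} {r : ℕ} (h : v r ≠ w r) : r + 1 ≤ dI v w := by
  unfold dI
  apply Finset.le_sup (f := fun r => r + 1)
  simp only [Finset.mem_filter, Finset.mem_union, Finsupp.mem_support_iff]
  refine ⟨?_, h⟩
  by_contra hc
  push_neg at hc
  exact h (by rw [hc.1, hc.2])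

lemma dI_le {v w : ℕ →₀ ℕ} {n : ℕ} (h : ∀ r, v r ≠ w r → r + 1 ≤ n) : dI v w ≤ n :=
  Finset.sup_le fun r hr => h r (Finset.mem_filter.mp hr).2

lemma dI_self (v : ℕ →₀ ℕ) : dI v v = 0 :=
  Nat.le_zero.mp (dI_le fun _ hr => absurd rfl hr)

lemma dI_comm (v w : ℕ →₀ ℕ) : dI v w = dI w v :=
  le_antisymm (dI_le fun _ hr => le_dI (Ne.symm hr)) (dI_le fun _ hr => le_dI (Ne.symm hr))

lemma eq_of_dI_eq_zero {v w : ℕ →₀ ℕ} (h : dI v w = 0) : v = w := by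
  ext r
  by_contra hr
  have := le_dI hr
  omega

lemma dI_ultra (v w u : ℕ →₀ ℕ) : dI v u ≤ max (dI v w) (dI w u) :=
  dI_le fun r hr => by
    by_cases h1 : v r = w r
    · exact le_trans (le_dI (fun h2 => hr (h1.trans h2))) (le_max_right _ _)
    · exact le_trans (le_dI h1) (le_max_left _ _)

/-- the integral distance on `PU0`. -/
noncomputable def dN (x y : PU0) : ℕ :=
  if x.1.1 = y.1.1 then dI x.1.2 y.1.2 else max x.1.1 y.1.1

/-- the real-valued distance on `PU0`. -/
noncomputable def dPU (x y : PU0) : ℝ := dN x y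

lemma dN_self (x : PU0) : dN x x = 0 := by
  simp [dN, dI_self]

lemma dN_comm (x y : PU0) : dN x y = dN y x := by
  unfold dN
  by_cases h : x.1.1 = y.1.1
  · rw [if_pos h, if_pos h.symm, dI_comm]
  · rw [if_neg h, if_neg (Ne.symm h), Nat.max_comm]

lemma eq_of_dN_eq_zero {x y : PU0} (h : dN x y = 0) : x = y := by
  unfold dN at h
  by_cases hc : x.1.1 = y.1.1
  · rw [if_pos hc] at h
    exact Subtype.ext (Prod.ext hc (eq_of_dI_eq_zero h))
  · rw [if_neg hc] at h
    exact absurd (by omega : x.1.1 = y.1.1) hc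

lemma dI_le_col {x y : PU0} (h : x.1.1 = y.1.1) : dI x.1.2 y.1.2 ≤ x.1.1 := by
  apply dI_le
  intro r hr
  by_cases hv : x.1.2 r = 0
  · have hw : y.1.2 r ≠ 0 := fun h0 => hr (by rw [hv, h0])
    have := (y.2 r hw).1
    omega
  · have := (x.2 r hv).1
    omega

lemma dN_ultra (x y z : PU0) : dN x z ≤ max (dN x y) (dN y z) := by
  unfold dN
  by_cases hac : x.1.1 = z.1.1
  · rw [if_pos hac]
    by_cases hab : x.1.1 = y.1.1
    · have hbc : y.1.1 = z.1.1 := by omega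
      rw [if_pos hab, if_pos hbc]
      exact dI_ultra _ _ _
    · have hbc : ¬ y.1.1 = z.1.1 := by omega
      rw [if_neg hab, if_neg hbc]
      have := dI_le_col hac
      omega
  · rw [if_neg hac]
    by_cases hab : x.1.1 = y.1.1
    · have hbc : ¬ y.1.1 = z.1.1 := by omega
      rw [if_pos hab, if_neg hbc]
      omega
    · rw [if_neg hab]
      by_cases hbc : y.1.1 = z.1.1
      · rw [if_pos hbc]; omega
      · rw [if_neg hbc]; omega

lemma metricPU : IsMetricD dPU := by
  refine ⟨fun x => by simp [dPU, dN_self], fun x y h => ?_, fun x y => ?_, fun x y z => ?_⟩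
  · have h' : (dN x y : ℝ) = 0 := h
    exact eq_of_dN_eq_zero (by exact_mod_cast h')
  · simp [dPU, dN_comm x y]
  · have h := dN_ultra x y z
    have h1 : dN x z ≤ dN x y + dN y z := by omega
    unfold dPU
    exact_mod_cast h1

lemma ultraPU : IsUltraD dPU := by
  intro x y z
  have h := dN_ultra x y z
  unfold dPU
  rw [← Nat.cast_max]
  exact_mod_cast h

lemma intPU : ∀ a b : PU0, ∃ n : ℕ, dPU a b = (n : ℝ) := fun a b => ⟨dN a b, rfl⟩

lemma colFinite (M : ℕ) : {p : PU0 | p.1.1 ≤ M}.Finite := by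
  rw [← Set.finite_coe_iff]
  have hinj : Function.Injective
      (fun p : {p : PU0 | p.1.1 ≤ M} =>
        ((⟨p.1.1.1, Nat.lt_succ_of_le p.2⟩ : Fin (M+1)),
          fun i : Fin (M+1) =>
            (⟨min (p.1.1.2 (i : ℕ)) M,
              lt_of_le_of_lt (min_le_right _ _) (Nat.lt_succ_self M)⟩ : Fin (M+1)))) := by
    rintro ⟨⟨⟨a, v⟩, hg⟩, ha⟩ ⟨⟨⟨b, w⟩, hg'⟩, hb⟩ h
    have ha' : a ≤ M := ha
    have hb' : b ≤ M := hb
    simp only [Prod.mk.injEq, Fin.mk.injEq] at h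
    obtain ⟨h1, h2⟩ := h
    have hva : ∀ r : ℕ, v r ≤ M := by
      intro r
      by_cases hv0 : v r = 0
      · omega
      · have := (hg r hv0).2
        simp only at this
        omega
    have hwb : ∀ r : ℕ, w r ≤ M := by
      intro r
      by_cases hw0 : w r = 0
      · omega
      · have := (hg' r hw0).2
        simp only at this
        omega
    have hfun : v = w := by
      ext r
      by_cases hr : r < M + 1
      · have := congrFun h2 ⟨r, hr⟩
        have h3 : min (v r) M = min (w r) M := congrArg Fin.val this
        have h4 := hva r
        have h5 := hwb r
        omega
      · have hv : v r = 0 := by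
          by_contra hv0
          have h6 : r < a := (hg r hv0).1
          omega
        have hw : w r = 0 := by
          by_contra hw0
          have h6 : r < b := (hg' r hw0).1
          omega
        rw [hv, hw]
    subst h1
    subst hfun
    rfl
  exact Finite.of_injective _ hinj

lemma bddPU : ∀ B : Set PU0, BoundedD dPU B → B.Finite := by
  intro B hB
  obtain ⟨C, hC⟩ := hB
  rcases B.eq_empty_or_nonempty with h | ⟨x0, hx0⟩
  · rw [h]; exact Set.finite_empty
  apply (colFinite (max x0.1.1 ⌈C⌉₊)).subset
  intro y hy
  by_cases hcol : y.1.1 = x0.1.1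
  · exact le_trans (le_of_eq hcol) (le_max_left _ _)
  · have h1 : dPU x0 y ≤ C := hC x0 hx0 y hy
    have h2 : dN x0 y = max x0.1.1 y.1.1 := by
      unfold dN; rw [if_neg (Ne.symm hcol)]
    have h3 : (dN x0 y : ℝ) ≤ (⌈C⌉₊ : ℝ) := le_trans h1 (Nat.le_ceil C)
    have h4 : dN x0 y ≤ ⌈C⌉₊ := by exact_mod_cast h3
    have : y.1.1 ≤ ⌈C⌉₊ := by omega
    exact le_trans this (le_max_right _ _)

/-! ### Chains and the relations `E` and `G` on a metric space -/

section Zpart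

variable {Z : Type*} [MetricSpace Z]

lemma chain_refl (r : ℝ) (x : Z) : ChainD dist r x x :=
  ⟨0, fun _ => x, rfl, rfl, fun i hi => absurd hi (Nat.not_lt_zero i)⟩

lemma chain_single {r : ℝ} {x y : Z} (h : dist x y < r) : ChainD dist r x y := by
  refine ⟨1, fun i => if i = 0 then x else y, by simp, by simp, ?_⟩
  intro i hi
  have hi0 : i = 0 := by omega
  subst hi0
  simpa using h

lemma chain_mono {r r' : ℝ} (hr : r ≤ r') {x y : Z} (h : ChainD dist r x y) :
    ChainD dist r' x y := by
  obtain ⟨k, c, h0, hk, hc⟩ := h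
  exact ⟨k, c, h0, hk, fun i hi => lt_of_lt_of_le (hc i hi) hr⟩

lemma chain_symm {r : ℝ} {x y : Z} (h : ChainD dist r x y) : ChainD dist r y x := by
  obtain ⟨k, c, h0, hk, hc⟩ := h
  refine ⟨k, fun i => c (k - i), by simp [hk], by simp [h0], ?_⟩
  intro i hi
  have h1 : k - i = (k - (i + 1)) + 1 := by omega
  have h2 := hc (k - (i + 1)) (by omega)
  rw [← h1] at h2
  rw [dist_comm]
  exact h2

lemma chain_trans {r : ℝ} {x y z : Z} (h1 : ChainD dist r x y) (h2 : ChainD dist r y z) :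
    ChainD dist r x z := by
  obtain ⟨k1, c1, h10, h1k, h1c⟩ := h1
  obtain ⟨k2, c2, h20, h2k, h2c⟩ := h2
  refine ⟨k1 + k2, fun i => if i < k1 then c1 i else c2 (i - k1), ?_, ?_, ?_⟩
  · by_cases h : 0 < k1
    · simp only [if_pos h]; exact h10
    · have hk0 : k1 = 0 := by omega
      subst hk0
      simp only [Nat.lt_irrefl, if_false, Nat.sub_zero]
      rw [h20, ← h1k, h10]
  · simp only [if_neg (by omega : ¬ k1 + k2 < k1)]
    rw [Nat.add_sub_cancel_left]
    exact h2k
  · intro i hi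
    by_cases hik : i + 1 < k1
    · simp only [if_pos (by omega : i < k1), if_pos hik]
      exact h1c i (by omega)
    · by_cases hik2 : i < k1
      · have hk1 : i + 1 = k1 := by omega
        simp only [if_pos hik2, if_neg hik]
        have he : c2 (i + 1 - k1) = c1 (i + 1) := by
          rw [hk1, Nat.sub_self, h20, h1k]
        rw [he]
        exact h1c i (by omega)
      · simp only [if_neg hik2, if_neg (by omega : ¬ i + 1 < k1)]
        have h3 : i + 1 - k1 = (i - k1) + 1 := by omega
        rw [h3]
        exact h2c _ (by omega)

variable (d : ℕ → Z)

/-- chain relation at integer gauge `r`. -/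
def Ech (r : ℕ) (x y : Z) : Prop := ChainD dist (r : ℝ) x y

/-- `x` is `r`-chained to one of the first `r` points of the sequence `d`. -/
def NearD (r : ℕ) (x : Z) : Prop := ∃ i ≤ r, Ech (r := r) x (d i)

/-- the equivalence-like relation `G_r`. -/
def GD (r : ℕ) (x y : Z) : Prop := Ech (r := r) x y ∨ (NearD d r x ∧ NearD d r y)

variable {d}

lemma Ech_refl (r : ℕ) (x : Z) : Ech (Z := Z) (r := r) x x := chain_refl _ _

lemma Ech_symm {r : ℕ} {x y : Z} (h : Ech (r := r) x y) : Ech (r := r) y x := chain_symm h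

lemma Ech_trans {r : ℕ} {x y z : Z} (h1 : Ech (r := r) x y) (h2 : Ech (r := r) y z) :
    Ech (r := r) x z := chain_trans h1 h2

lemma Ech_mono {r r' : ℕ} (h : r ≤ r') {x y : Z} (hE : Ech (r := r) x y) :
    Ech (r := r') x y := chain_mono (by exact_mod_cast h) hE

lemma Ech_of_lt {r : ℕ} {x y : Z} (h : dist x y < r) : Ech (r := r) x y := chain_single h

lemma GD_refl (r : ℕ) (x : Z) : GD d r x x := Or.inl (Ech_refl r x)

lemma GD_symm {r : ℕ} {x y : Z} (h : GD d r x y) : GD d r y x := by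
  rcases h with h | ⟨h1, h2⟩
  · exact Or.inl (Ech_symm h)
  · exact Or.inr ⟨h2, h1⟩

lemma GD_trans {r : ℕ} {x y z : Z} (h1 : GD d r x y) (h2 : GD d r y z) : GD d r x z := by
  rcases h1 with h1 | ⟨hx, hy⟩
  · rcases h2 with h2 | ⟨hy', hz⟩
    · exact Or.inl (Ech_trans h1 h2)
    · refine Or.inr ⟨?_, hz⟩
      obtain ⟨i, hi, hei⟩ := hy'
      exact ⟨i, hi, Ech_trans h1 hei⟩
  · rcases h2 with h2 | ⟨hy', hz⟩
    · refine Or.inr ⟨hx, ?_⟩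
      obtain ⟨i, hi, hei⟩ := hy
      exact ⟨i, hi, Ech_trans (Ech_symm h2) hei⟩
    · exact Or.inr ⟨hx, hz⟩

lemma NearD_mono {r r' : ℕ} (h : r ≤ r') {x : Z} (hN : NearD d r x) : NearD d r' x := by
  obtain ⟨i, hi, hei⟩ := hN
  exact ⟨i, le_trans hi h, Ech_mono h hei⟩

lemma GD_mono {r r' : ℕ} (h : r ≤ r') {x y : Z} (hG : GD d r x y) : GD d r' x y := by
  rcases hG with h1 | ⟨h1, h2⟩
  · exact Or.inl (Ech_mono h h1)
  · exact Or.inr ⟨NearD_mono h h1, NearD_mono h h2⟩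

end Zpart

/-! ### the column-scale function -/

noncomputable def mf (B : ℕ → ℕ) : ℕ → ℕ
  | 0 => B 0 + 2
  | n + 1 => max (mf B n + 1) (B (n + 1))

lemma mf_strictMono (B : ℕ → ℕ) : StrictMono (mf B) :=
  strictMono_nat_of_lt_succ fun n => by
    have h : mf B (n + 1) = max (mf B n + 1) (B (n + 1)) := rfl
    omega

lemma mf_ge_B (B : ℕ → ℕ) (n : ℕ) : B n ≤ mf B n := by
  cases n with
  | zero => show B 0 ≤ B 0 + 2; omega
  | succ k =>
    have h : mf B (k + 1) = max (mf B k + 1) (B (k + 1)) := rfl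
    omega

lemma mf_ge (B : ℕ → ℕ) (hB : ∀ k, k + 2 ≤ B k) (n : ℕ) : n + 2 ≤ mf B n := by
  cases n with
  | zero => show 0 + 2 ≤ B 0 + 2; omega
  | succ k =>
    have h : mf B (k + 1) = max (mf B k + 1) (B (k + 1)) := rfl
    have := hB (k + 1)
    omega

end U17
/-- There is a countable integral ultrametric space `PU` with all bounded
subsets finite into which every proper metric space of asymptotic dimension 0 coarsely
embeds. -/
theorem universal_space_proper_asdim_zero :
    ∃ (PU : Type) (dP : PU → PU → ℝ), Countable PU ∧ IsMetricD dP ∧ IsUltraD dP ∧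
      (∀ a b : PU, ∃ n : ℕ, dP a b = (n : ℝ)) ∧
      (∀ B : Set PU, BoundedD dP B → B.Finite) ∧
      ∀ (Z : Type u) [MetricSpace Z],
        (∀ B : Set Z, Bornology.IsBounded B → IsCompact (closure B)) →
        AsDimZeroD (dist : Z → Z → ℝ) →
        ∃ e : Z → PU, CoarseEmbD (dist : Z → Z → ℝ) dP e := by
  classical
  refine ⟨U17.PU0, U17.dPU, inferInstance, U17.metricPU, U17.ultraPU, U17.intPU, U17.bddPU, ?_⟩
  intro Z _inst hprop h0
  by_cases hne : Nonempty Z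
  · -- the main case
    haveI := hne
    haveI : ProperSpace Z := ⟨fun x r =>
      (hprop _ Metric.isBounded_closedBall).of_isClosed_subset Metric.isClosed_closedBall
        subset_closure⟩
    set d : ℕ → Z := TopologicalSpace.denseSeq Z with hd_def
    have hd : DenseRange d := TopologicalSpace.denseRange_denseSeq Z
    have hdense : ∀ x : Z, ∃ i, dist x (d i) < 1 := fun x =>
      Metric.denseRange_iff.mp hd x 1 one_pos
    choose Sb hSbpos hSb using fun r : ℕ => h0 ((r : ℝ) + 1) (by positivity)
    have EB : ∀ (r : ℕ) (x y : Z), U17.Ech r x y → dist x y ≤ Sb r := fun r x y h =>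
      hSb r x y (U17.chain_mono (le_add_of_nonneg_right zero_le_one) h)
    have hE1 : ∀ r : ℕ, 1 ≤ r → ∀ x w : Z, dist x w < 1 → U17.Ech r x w := by
      intro r hr x w h
      exact U17.chain_single (lt_of_lt_of_le h (by exact_mod_cast hr))
    have hexG : ∀ x y : Z, ∃ r : ℕ, U17.GD d r x y := by
      intro x y
      obtain ⟨i, hi⟩ := hdense x
      obtain ⟨j, hj⟩ := hdense y
      refine ⟨max (max i j) 1, Or.inr ⟨⟨i, by omega, ?_⟩, ⟨j, by omega, ?_⟩⟩⟩
      · exact hE1 _ (le_max_right _ _) _ _ hi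
      · exact hE1 _ (le_max_right _ _) _ _ hj
    have hexz : ∀ x : Z, ∃ r, U17.GD d r x (d 0) := fun x => hexG x (d 0)
    have hexi : ∀ (r : ℕ) (x : Z), ∃ i, U17.GD d (max r 1) x (d i) := by
      intro r x
      obtain ⟨i, hi⟩ := hdense x
      exact ⟨i, Or.inl (hE1 _ (le_max_right r 1) x (d i) hi)⟩
    let Hm : Z → ℕ := fun x => Nat.find (hexz x)
    have hHm_spec : ∀ x, U17.GD d (Hm x) x (d 0) := fun x => Nat.find_spec (hexz x)
    have hHm_le : ∀ (x : Z) (r : ℕ), U17.GD d r x (d 0) → Hm x ≤ r := fun x r h =>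
      Nat.find_le h
    let ix : ℕ → Z → ℕ := fun r x => Nat.find (hexi r x)
    have hix_spec : ∀ r (x : Z), U17.GD d (max r 1) x (d (ix r x)) := fun r x =>
      Nat.find_spec (hexi r x)
    have hix_eq : ∀ r (x y : Z), U17.GD d (max r 1) x y → ix r x = ix r y := by
      intro r x y h
      apply le_antisymm
      · exact Nat.find_le (U17.GD_trans h (hix_spec r y))
      · exact Nat.find_le (U17.GD_trans (U17.GD_symm h) (hix_spec r x))
    have hix_rev : ∀ r (x y : Z), ix r x = ix r y → U17.GD d (max r 1) x y := by
      intro r x y h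
      have h1 := hix_spec r x
      have h2 := hix_spec r y
      rw [h] at h1
      exact U17.GD_trans h1 (U17.GD_symm h2)
    let lab : ℕ → Z → ℕ := fun r x => if U17.GD d (max r 1) x (d 0) then 0 else ix r x + 1
    have hlab_iff : ∀ r (x y : Z), lab r x = lab r y ↔ U17.GD d (max r 1) x y := by
      intro r x y
      show (if U17.GD d (max r 1) x (d 0) then 0 else ix r x + 1)
         = (if U17.GD d (max r 1) y (d 0) then 0 else ix r y + 1) ↔ _
      by_cases hx : U17.GD d (max r 1) x (d 0) <;> by_cases hy : U17.GD d (max r 1) y (d 0)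
      · rw [if_pos hx, if_pos hy]
        exact ⟨fun _ => U17.GD_trans hx (U17.GD_symm hy), fun _ => rfl⟩
      · rw [if_pos hx, if_neg hy]
        constructor
        · intro h; omega
        · intro h; exact absurd (U17.GD_trans (U17.GD_symm h) hx) hy
      · rw [if_neg hx, if_pos hy]
        constructor
        · intro h; omega
        · intro h; exact absurd (U17.GD_trans h hy) hx
      · rw [if_neg hx, if_neg hy]
        constructor
        · intro h; exact hix_rev r x y (by omega)
        · intro h; rw [hix_eq r x y h]
    let hh : Z → ℕ := fun x => max (Hm x) 1
    let nn : Z → ℕ := fun x => hh x - 1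
    have hnn1 : ∀ x, nn x + 1 = hh x := by
      intro x
      have e1 : hh x = max (Hm x) 1 := rfl
      show hh x - 1 + 1 = hh x
      omega
    have hGz' : ∀ x, U17.GD d (nn x + 1) x (d 0) := fun x => by
      rw [hnn1 x]
      exact U17.GD_mono (le_max_left _ _) (hHm_spec x)
    have hlab_ne : ∀ r (x : Z), lab r x ≠ 0 → r ≤ nn x ∧ lab r x = ix r x + 1 := by
      intro r x h
      have hng : ¬ U17.GD d (max r 1) x (d 0) := by
        intro hg
        apply h
        show (if U17.GD d (max r 1) x (d 0) then 0 else ix r x + 1) = 0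
        rw [if_pos hg]
      have h2 : ¬ (Hm x ≤ max r 1) := fun hle => hng (U17.GD_mono hle (hHm_spec x))
      have e1 : hh x = max (Hm x) 1 := rfl
      have e2 : nn x = hh x - 1 := rfl
      constructor
      · omega
      · show (if U17.GD d (max r 1) x (d 0) then 0 else ix r x + 1) = ix r x + 1
        rw [if_neg hng]
    have hDbex : ∀ t : ℕ, ∃ C : ℝ, 0 ≤ C ∧ ∀ x y : Z, U17.GD d t x y → dist x y ≤ C := by
      intro t
      obtain ⟨T, hT0, hTi⟩ : ∃ T : ℝ, 0 ≤ T ∧ ∀ i ≤ t, dist (d i) (d 0) ≤ T := by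
        induction t with
        | zero =>
          refine ⟨0, le_refl _, fun i hi => ?_⟩
          rw [Nat.le_zero.mp hi]
          simp
        | succ k ih =>
          obtain ⟨T, hT0, hTi⟩ := ih
          refine ⟨max T (dist (d (k+1)) (d 0)), le_trans hT0 (le_max_left _ _), ?_⟩
          intro i hi
          rcases Nat.lt_succ_iff_lt_or_eq.mp (Nat.lt_succ_of_le hi) with h | h
          · exact le_trans (hTi i (by omega)) (le_max_left _ _)
          · rw [h]
            exact le_max_right _ _
      refine ⟨Sb t + Sb t + (T + T), by have := hSbpos t; linarith, ?_⟩
      intro x y hg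
      rcases hg with he | ⟨⟨i, hi, hei⟩, ⟨j, hj, hej⟩⟩
      · have h1 := EB t x y he
        have := hSbpos t
        linarith
      · have h1 := EB t x (d i) hei
        have h2 := EB t y (d j) hej
        have h3 := hTi i hi
        have h4 := hTi j hj
        have h5 : dist x y ≤ dist x (d i) + dist (d i) (d j) + dist (d j) y :=
          dist_triangle4 x (d i) (d j) y
        have h6 : dist (d i) (d j) ≤ dist (d i) (d 0) + dist (d 0) (d j) := dist_triangle _ _ _
        have h7 : dist (d 0) (d j) = dist (d j) (d 0) := dist_comm _ _
        have h8 : dist y (d j) = dist (d j) y := dist_comm _ _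
        linarith
    choose Db hDb0 hDbB using hDbex
    have hfin : ∀ n r : ℕ,
        Set.Finite {v : ℕ | ∃ x : Z, U17.GD d (n+1) x (d 0) ∧ ix r x = v} := by
      intro n r
      set A := {v : ℕ | ∃ x : Z, U17.GD d (n+1) x (d 0) ∧ ix r x = v} with hA
      set N := max (n+1) (max r 1) with hN
      have hrep : ∀ v ∈ A, dist (d v) (d 0) ≤ Db N := by
        rintro v ⟨x, hx, rfl⟩
        apply hDbB N
        exact U17.GD_trans (U17.GD_symm (U17.GD_mono (le_max_right _ _) (hix_spec r x)))
          (U17.GD_mono (le_max_left _ _) hx)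
      have hsep : ∀ v ∈ A, ∀ w ∈ A, v ≠ w → 1 ≤ dist (d v) (d w) := by
        rintro v ⟨x, hx, rfl⟩ w ⟨y, hy, rfl⟩ hvw
        by_contra hlt
        push_neg at hlt
        have hE : U17.Ech (max r 1) (d (ix r x)) (d (ix r y)) :=
          hE1 _ (le_max_right _ _) _ _ hlt
        exact hvw (hix_eq r x y (U17.GD_trans (hix_spec r x)
          (U17.GD_trans (Or.inl hE) (U17.GD_symm (hix_spec r y)))))
      have hK : IsCompact (closure (Metric.closedBall (d 0) (Db N))) :=
        hprop _ Metric.isBounded_closedBall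
      obtain ⟨t, hts, htf, htc⟩ := hK.finite_cover_balls (by norm_num : (0:ℝ) < 1/2)
      have hmem : ∀ v ∈ A, ∃ c ∈ t, d v ∈ Metric.ball c (1/2) := by
        intro v hv
        have h1 : d v ∈ closure (Metric.closedBall (d 0) (Db N)) :=
          subset_closure (Metric.mem_closedBall.mpr (hrep v hv))
        have h2 := htc h1
        simpa using h2
      classical
      let F : ℕ → Z := fun v => if h : v ∈ A then (hmem v h).choose else d 0
      have hFt : ∀ v ∈ A, F v ∈ t ∧ d v ∈ Metric.ball (F v) (1/2) := by
        intro v hv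
        have hFv : F v = (hmem v hv).choose := dif_pos hv
        rw [hFv]
        exact ⟨(hmem v hv).choose_spec.1, (hmem v hv).choose_spec.2⟩
      apply Set.Finite.of_finite_image (f := F)
      · apply htf.subset
        rintro _ ⟨v, hv, rfl⟩
        exact (hFt v hv).1
      · intro v hv w hw hFvw
        by_contra hvw
        have h1 := (hFt v hv).2
        have h2 := (hFt w hw).2
        rw [hFvw] at h1
        have h3 : dist (d v) (F w) < 1/2 := Metric.mem_ball.mp h1
        have h4 : dist (d w) (F w) < 1/2 := Metric.mem_ball.mp h2
        have h5 : dist (d v) (d w) ≤ dist (d v) (F w) + dist (F w) (d w) := dist_triangle _ _ _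
        have h6 : dist (F w) (d w) = dist (d w) (F w) := dist_comm _ _
        have h7 := hsep v hv w hw hvw
        linarith
    have hBex : ∀ n : ℕ, ∃ b : ℕ, n + 2 ≤ b ∧
        ∀ r ≤ n, ∀ x : Z, U17.GD d (n+1) x (d 0) → ix r x + 1 < b := by
      intro n
      have hU : Set.Finite
          {v : ℕ | ∃ r ≤ n, ∃ x : Z, U17.GD d (n+1) x (d 0) ∧ ix r x = v} := by
        have hsub : {v : ℕ | ∃ r ≤ n, ∃ x : Z, U17.GD d (n+1) x (d 0) ∧ ix r x = v}
            ⊆ ⋃ r ∈ Set.Iic n, {v : ℕ | ∃ x : Z, U17.GD d (n+1) x (d 0) ∧ ix r x = v} := by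
          rintro v ⟨r, hr, hx⟩
          exact Set.mem_biUnion hr hx
        exact Set.Finite.subset
          (Set.Finite.biUnion (Set.finite_Iic n) fun r _ => hfin n r) hsub
      obtain ⟨b0, hb0⟩ := hU.bddAbove
      refine ⟨b0 + n + 3, by omega, ?_⟩
      intro r hr x hx
      have : ix r x ≤ b0 := hb0 ⟨r, hr, x, hx, rfl⟩
      omega
    choose B hB1 hB2 using hBex
    let m : ℕ → ℕ := U17.mf B
    have hm_mono : StrictMono m := U17.mf_strictMono B
    have hm_ge : ∀ n, n + 2 ≤ m n := U17.mf_ge B hB1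
    have hm_geB : ∀ n, B n ≤ m n := U17.mf_ge_B B
    have hsupp : ∀ x : Z, ∀ r : ℕ, (fun r => lab r x) r ≠ 0 → r ∈ Finset.range (m (nn x)) := by
      intro x r h
      have h1 := (hlab_ne r x h).1
      have h2 := hm_ge (nn x)
      exact Finset.mem_range.mpr (by omega)
    let ev : Z → (ℕ →₀ ℕ) := fun x =>
      Finsupp.onFinset (Finset.range (m (nn x))) (fun r => lab r x) (hsupp x)
    have hev_ap : ∀ (x : Z) (r : ℕ), ev x r = lab r x := fun x r => rfl
    have hgood : ∀ x : Z, U17.Good (m (nn x), ev x) := by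
      intro x r h
      have h' : lab r x ≠ 0 := h
      obtain ⟨h1, h2⟩ := hlab_ne r x h'
      constructor
      · have := hm_ge (nn x)
        show r < m (nn x)
        omega
      · show ev x r < m (nn x)
        have h2' : ev x r = ix r x + 1 := h2
        have h3 := hB2 (nn x) r h1 x (hGz' x)
        have h4 := hm_geB (nn x)
        omega
    let e : Z → U17.PU0 := fun x => ⟨(m (nn x), ev x), hgood x⟩
    refine ⟨e, ?_, ?_⟩
    · -- large scale continuity
      intro R hR
      set t : ℕ := ⌈R⌉₊ + 1 with ht
      have ht1 : 1 ≤ t := by omega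
      refine ⟨((m t + t : ℕ) : ℝ) + 1, by positivity, ?_⟩
      intro x y hxy
      have hRt : R < (t : ℝ) := by
        have := Nat.le_ceil R
        rw [ht]
        push_cast
        linarith
      have hGt : U17.GD d t x y := Or.inl (U17.chain_single (lt_of_le_of_lt hxy hRt))
      have hbound : U17.dN (e x) (e y) ≤ m t + t := by
        by_cases hcol : nn x = nn y
        · have hcols : (e x).1.1 = (e y).1.1 := by
            show m (nn x) = m (nn y)
            rw [hcol]
          have hEq : U17.dN (e x) (e y) = U17.dI (ev x) (ev y) := by
            unfold U17.dN
            rw [if_pos hcols]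
          rw [hEq]
          have hdi : U17.dI (ev x) (ev y) ≤ t := by
            apply U17.dI_le
            intro r hr
            have hlabne : lab r x ≠ lab r y := hr
            have hng : ¬ U17.GD d (max r 1) x y := fun hg => hlabne ((hlab_iff r x y).mpr hg)
            have h2 : ¬ (t ≤ max r 1) := fun hle => hng (U17.GD_mono hle hGt)
            omega
          omega
        · have hcols : ¬ (e x).1.1 = (e y).1.1 := by
            show ¬ m (nn x) = m (nn y)
            exact fun hEq => hcol (hm_mono.injective hEq)
          have hdn : U17.dN (e x) (e y) = max (m (nn x)) (m (nn y)) := by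
            unfold U17.dN
            rw [if_neg hcols]
          have h1 : Hm x ≤ max (Hm y) t :=
            hHm_le x _ (U17.GD_trans (U17.GD_mono (le_max_right _ _) hGt)
              (U17.GD_mono (le_max_left _ _) (hHm_spec y)))
          have h2 : Hm y ≤ max (Hm x) t :=
            hHm_le y _ (U17.GD_trans (U17.GD_mono (le_max_right _ _) (U17.GD_symm hGt))
              (U17.GD_mono (le_max_left _ _) (hHm_spec x)))
          have e1 : hh x = max (Hm x) 1 := rfl
          have e2 : hh y = max (Hm y) 1 := rfl
          have e3 : nn x = hh x - 1 := rfl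
          have e4 : nn y = hh y - 1 := rfl
          have hnnx : nn x ≤ t ∧ nn y ≤ t := by
            constructor <;> omega
          have hmx : m (nn x) ≤ m t := hm_mono.monotone hnnx.1
          have hmy : m (nn y) ≤ m t := hm_mono.monotone hnnx.2
          omega
      have hcast : (U17.dN (e x) (e y) : ℝ) ≤ ((m t + t : ℕ) : ℝ) := by exact_mod_cast hbound
      have hfin2 : U17.dPU (e x) (e y) = (U17.dN (e x) (e y) : ℝ) := rfl
      rw [hfin2]
      linarith
    · -- uniform properness
      intro R hR
      set r0 : ℕ := ⌈R⌉₊ with hr0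
      have hr01 : 1 ≤ r0 := Nat.one_le_ceil_iff.mpr hR
      refine ⟨Db r0 + 1, by have := hDb0 r0; linarith, ?_⟩
      intro x y hxy
      have hxy' : (U17.dN (e x) (e y) : ℝ) ≤ R := hxy
      have hdn : U17.dN (e x) (e y) ≤ r0 := by
        have h1 : (U17.dN (e x) (e y) : ℝ) ≤ (r0 : ℝ) := le_trans hxy' (Nat.le_ceil R)
        exact_mod_cast h1
      have hG : U17.GD d r0 x y := by
        by_cases hcol : (e x).1.1 = (e y).1.1
        · have hEq : U17.dN (e x) (e y) = U17.dI (ev x) (ev y) := by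
            unfold U17.dN
            rw [if_pos hcol]
          have hdi : U17.dI (ev x) (ev y) ≤ r0 := by omega
          have hlabeq : lab r0 x = lab r0 y := by
            by_contra hne2
            have h2 : ev x r0 ≠ ev y r0 := hne2
            have := U17.le_dI h2
            omega
          have h3 := (hlab_iff r0 x y).mp hlabeq
          rwa [max_eq_left hr01] at h3
        · have hdn2 : U17.dN (e x) (e y) = max (m (nn x)) (m (nn y)) := by
            unfold U17.dN
            rw [if_neg hcol]
          have hgx := hm_ge (nn x)
          have hgy := hm_ge (nn y)
          have e1 : hh x = max (Hm x) 1 := rfl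
          have e2 : hh y = max (Hm y) 1 := rfl
          have e3 : nn x = hh x - 1 := rfl
          have e4 : nn y = hh y - 1 := rfl
          have hHx : Hm x ≤ r0 := by omega
          have hHy : Hm y ≤ r0 := by omega
          exact U17.GD_trans (U17.GD_mono hHx (hHm_spec x))
            (U17.GD_symm (U17.GD_mono hHy (hHm_spec y)))
      have := hDbB r0 x y hG
      linarith
  · -- Z is empty
    refine ⟨fun z => absurd (⟨z⟩ : Nonempty Z) hne, ?_, ?_⟩ <;>
    · intro R hR
      exact ⟨1, one_pos, fun x y _ => (hne ⟨x⟩).elim⟩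
end

section
/- There exists a separable metric space X of asymptotic dimension 0 such that X admits no coarse embedding into any proper metric space. -/
/-- The example distance on `ℕ × ℕ`. -/
noncomputable def exD (p q : ℕ × ℕ) : ℝ :=
  if p = q then 0 else (max p.1 q.1 : ℕ) + 1

lemma exD_self (p : ℕ × ℕ) : exD p p = 0 := by simp [exD]

lemma exD_ne {p q : ℕ × ℕ} (h : p ≠ q) : exD p q = (max p.1 q.1 : ℕ) + 1 := by
  simp [exD, h]

lemma exD_nonneg (p q : ℕ × ℕ) : 0 ≤ exD p q := by
  unfold exD; split
  · exact le_rfl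
  · positivity

lemma exD_le (p q : ℕ × ℕ) : exD p q ≤ (max p.1 q.1 : ℕ) + 1 := by
  unfold exD; split
  · positivity
  · exact le_rfl

lemma exD_chain_bound (r : ℝ) :
    ∀ (k : ℕ) (c : ℕ → ℕ × ℕ), (∀ i < k, exD (c i) (c (i + 1)) < r) →
      (c 0 = c k ∨ (((c 0).1 : ℝ) + 1 < r ∧ ((c k).1 : ℝ) + 1 < r)) := by
  intro k
  induction k with
  | zero => intro c _; exact Or.inl rfl
  | succ k ih =>
    intro c hc
    have hstep : exD (c k) (c (k + 1)) < r := hc k (Nat.lt_succ_self k)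
    by_cases heq : c k = c (k + 1)
    · rcases ih c (fun i hi => hc i (hi.trans (Nat.lt_succ_self k))) with h | ⟨h0, hk⟩
      · exact Or.inl (h.trans heq)
      · exact Or.inr ⟨h0, heq ▸ hk⟩
    · have h2 : ((max (c k).1 (c (k+1)).1 : ℕ) : ℝ) + 1 < r := by
        rw [exD_ne heq] at hstep; exact_mod_cast hstep
      have hk1 : ((c k).1 : ℝ) + 1 < r := by
        refine lt_of_le_of_lt ?_ h2
        have : ((c k).1 : ℕ) ≤ max (c k).1 (c (k+1)).1 := le_max_left _ _
        exact_mod_cast add_le_add (Nat.cast_le.mpr this) (le_refl (1:ℝ))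
      have hk2 : ((c (k+1)).1 : ℝ) + 1 < r := by
        refine lt_of_le_of_lt ?_ h2
        have : ((c (k+1)).1 : ℕ) ≤ max (c k).1 (c (k+1)).1 := le_max_right _ _
        exact_mod_cast add_le_add (Nat.cast_le.mpr this) (le_refl (1:ℝ))
      rcases ih c (fun i hi => hc i (hi.trans (Nat.lt_succ_self k))) with h | ⟨h0, _⟩
      · exact Or.inr ⟨h ▸ hk1, hk2⟩
      · exact Or.inr ⟨h0, hk2⟩

/-- There is a separable metric space of asymptotic dimension 0 which
admits no coarse embedding into any proper metric space. -/
theorem separable_asdim_zero_not_embeddable_into_proper :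
    ∃ (X : Type) (dX : X → X → ℝ), IsMetricD dX ∧
      (∃ D : Set X, D.Countable ∧ ∀ x : X, ∀ ε > (0 : ℝ), ∃ y ∈ D, dX x y < ε) ∧
      AsDimZeroD dX ∧
      ∀ (Y : Type u) [MetricSpace Y],
        (∀ B : Set Y, Bornology.IsBounded B → IsCompact (closure B)) →
        ∀ f : X → Y, ¬ CoarseEmbD dX (dist : Y → Y → ℝ) f := by
  classical
  refine ⟨ℕ × ℕ, exD, ?_, ?_, ?_, ?_⟩
  · -- metric
    refine ⟨exD_self, ?_, ?_, ?_⟩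
    · intro x y h
      by_contra hne
      rw [exD_ne hne] at h
      have : (0:ℝ) < (max x.1 y.1 : ℕ) + 1 := by positivity
      linarith
    · intro x y
      by_cases h : x = y
      · subst h; rfl
      · rw [exD_ne h, exD_ne (Ne.symm h), max_comm]
    · intro x y z
      by_cases hxz : x = z
      · subst hxz
        rw [exD_self]
        exact add_nonneg (exD_nonneg _ _) (exD_nonneg _ _)
      · rw [exD_ne hxz]
        by_cases hxy : x = y
        · subst hxy
          rw [exD_self, zero_add, exD_ne hxz]
        · by_cases hyz : y = z
          · subst hyz
            rw [exD_self, add_zero, exD_ne hxy]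
          · rw [exD_ne hxy, exD_ne hyz]
            have h1 : (max x.1 z.1 : ℕ) ≤ max x.1 y.1 + max y.1 z.1 := by
              apply max_le
              · exact le_trans (le_max_left _ _) (Nat.le_add_right _ _)
              · exact le_trans (le_max_right _ _) (Nat.le_add_left _ _)
            have := (Nat.cast_le (α := ℝ)).mpr h1
            push_cast at this ⊢
            linarith
  · -- separable
    exact ⟨Set.univ, Set.countable_univ, fun x ε hε => ⟨x, Set.mem_univ x, by rw [exD_self]; exact hε⟩⟩
  · -- asdim 0
    intro r hr
    refine ⟨r, hr, ?_⟩
    rintro a b ⟨k, c, h0, hk, hc⟩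
    rcases exD_chain_bound r k c hc with h | ⟨ha, hb⟩
    · rw [← h0, ← hk, ← h, exD_self]; exact le_of_lt hr
    · rw [← h0, ← hk]
      by_cases heq : c 0 = c k
      · rw [heq, exD_self]; exact le_of_lt hr
      · rw [exD_ne heq]
        have : ((max (c 0).1 (c k).1 : ℕ) : ℝ) + 1 < r := by
          rcases max_cases (c 0).1 (c k).1 with ⟨h, _⟩ | ⟨h, _⟩ <;> rw [h]
          · exact ha
          · exact hb
        linarith
  · -- non-embeddability
    intro Y _ hProper f ⟨hLSC, hUP⟩
    obtain ⟨S', hS'pos, hS'⟩ := hUP 1 one_pos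
    set n : ℕ := ⌈S'⌉₊ with hn
    have hnS : S' ≤ (n : ℝ) := Nat.le_ceil S'
    obtain ⟨s, hspos, hs⟩ := hLSC ((n : ℝ) + 1) (by positivity)
    set g : ℕ → Y := fun i => f (n, i) with hg
    have hrange : Set.range g ⊆ Metric.closedBall (g 0) s := by
      rintro y ⟨i, rfl⟩
      rw [Metric.mem_closedBall]
      apply hs
      exact le_trans (exD_le _ _) (by simp)
    have hbd : Bornology.IsBounded (Set.range g) :=
      Metric.isBounded_closedBall.subset hrange
    have hK : IsCompact (closure (Set.range g)) := hProper _ hbd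
    obtain ⟨y, _, φ, hφ, hlim⟩ :=
      hK.tendsto_subseq (fun i => subset_closure (Set.mem_range_self (f := g) i))
    obtain ⟨N, hN⟩ := Metric.tendsto_atTop.mp hlim (1/2) (by norm_num)
    have h1 : dist (g (φ N)) (g (φ (N + 1))) ≤ 1 := by
      have hA := hN N le_rfl
      have hB := hN (N + 1) (Nat.le_succ N)
      calc dist (g (φ N)) (g (φ (N + 1)))
          ≤ dist (g (φ N)) y + dist y (g (φ (N + 1))) := dist_triangle _ _ _
        _ ≤ 1/2 + 1/2 := by
            rw [dist_comm y]
            exact add_le_add hA.le hB.le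
        _ = 1 := by norm_num
    have h2 := hS' (n, φ N) (n, φ (N + 1)) h1
    have hne : ((n : ℕ), φ N) ≠ ((n : ℕ), φ (N + 1)) := by
      intro h
      have : φ N = φ (N + 1) := (Prod.mk.injEq _ _ _ _ ▸ h).2
      exact absurd this (Nat.ne_of_lt (hφ (Nat.lt_succ_self N)))
    rw [exD_ne hne] at h2
    simp only [max_self] at h2
    have : (n : ℝ) < (n : ℝ) + 1 := by linarith
    linarith
end
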